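/- Let C = C₁ ⊗ (−C₂). Then Υ_C(t) = 0 for all t ∈ [0,2], but Υ²_{C,1}(s) = −4 + 2s for s ∈ [0,1] and Υ²_{C,1}(s) = −2s for s ∈ [1,2]. In particular, the vanishing of Υ_C does not imply the vanishing of Υ²: C is detected as nontrivial by Υ². -/

import Mathlib

open scoped BigOperators

/-- A "pre-complex": a finite distinguished basis `B`, a grading `gr`,
bifiltration functions `alg` and `alex`, and a differential recorded by its
matrix `d` over the field `F₂ = ZMod 2`:  `∂ x = ∑ y, d x y • y`. -/
structure PreComplex where
  B : Type
  fB : Fintype B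
  dB : DecidableEq B
  gr : B → ℤ
  alg : B → ℤ
  alex : B → ℤ
  d : B → B → ZMod 2

attribute [instance] PreComplex.fB PreComplex.dB

namespace PreComplex

variable (C : PreComplex)

/-- Chains: F₂-linear combinations of basis elements. -/
abbrev Chain : Type := C.B → ZMod 2

/-- The boundary of a chain, extending `∂ x = ∑ y, d x y • y` linearly. -/
def bdry (c : C.Chain) : C.Chain := fun y => ∑ x, c x * C.d x y

/-- A chain is homogeneous of grading `k`. -/
def isGraded (c : C.Chain) (k : ℤ) : Prop := ∀ x, c x ≠ 0 → C.gr x = k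

def isCycle (c : C.Chain) : Prop := C.bdry c = 0

def isBoundary (c : C.Chain) : Prop := ∃ w : C.Chain, C.bdry w = c

/-- A cycle of grading 0 representing the nonzero class of `H₀(C)`. -/
def GenCycle (z : C.Chain) : Prop :=
  C.isCycle z ∧ C.isGraded z 0 ∧ ¬ C.isBoundary z

/-- The bifiltration level of a basis element. -/
def lev (x : C.B) : ℤ × ℤ := (C.alg x, C.alex x)

/-- A model knot complex: `∂ ∘ ∂ = 0`; `∂` drops the grading by one and does
not increase either filtration; the homology is one dimensional, concentrated
in grading 0; and the minimum over cycles representing the generator of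
`H₀(C)` of their maximal `alg` (resp. `alex`) filtration level is 0. -/
def IsModel : Prop :=
  (∀ x z, (∑ y, C.d x y * C.d y z) = 0) ∧
  (∀ x y, C.d x y ≠ 0 → C.gr y = C.gr x - 1 ∧ C.alg y ≤ C.alg x ∧ C.alex y ≤ C.alex x) ∧
  (∀ k : ℤ, k ≠ 0 → ∀ z : C.Chain, C.isCycle z → C.isGraded z k → C.isBoundary z) ∧
  (∃ z : C.Chain, C.GenCycle z) ∧
  (∀ z z' : C.Chain, C.GenCycle z → C.GenCycle z' → C.isBoundary (z + z')) ∧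
  (∃ z : C.Chain, C.GenCycle z ∧ ∀ x, z x ≠ 0 → C.alg x ≤ 0) ∧
  (∀ z : C.Chain, C.GenCycle z → ∃ x, z x ≠ 0 ∧ 0 ≤ C.alg x) ∧
  (∃ z : C.Chain, C.GenCycle z ∧ ∀ x, z x ≠ 0 → C.alex x ≤ 0) ∧
  (∀ z : C.Chain, C.GenCycle z → ∃ x, z x ≠ 0 ∧ 0 ≤ C.alex x)

/-- An acyclic complex: conditions (i) and (ii) hold but the homology vanishes. -/
def IsAcyclic : Prop :=
  (∀ x z, (∑ y, C.d x y * C.d y z) = 0) ∧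
  (∀ x y, C.d x y ≠ 0 → C.gr y = C.gr x - 1 ∧ C.alg y ≤ C.alg x ∧ C.alex y ≤ C.alex x) ∧
  (∀ z : C.Chain, C.isCycle z → C.isBoundary z)

end PreComplex

/-- `f_t(i,j) = (t/2)·j + (1 − t/2)·i`. -/
noncomputable def fval (t : ℝ) (p : ℤ × ℤ) : ℝ :=
  (t / 2) * (p.2 : ℝ) + (1 - t / 2) * (p.1 : ℝ)

namespace PreComplex

variable (C : PreComplex)

/-- A chain lies in the subcomplex `F_{t,s}`. -/
def inF (t s : ℝ) (c : C.Chain) : Prop :=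
  ∀ x, c x ≠ 0 → fval t (C.lev x) ≤ s

/-- `γ_C(t)`: the minimal `s` such that `H₀(F_{t,s}) → H₀(C)` is surjective,
i.e. such that `F_{t,s}` contains a cycle representing the generator. -/
noncomputable def gamma (t : ℝ) : ℝ :=
  sInf {s : ℝ | ∃ z : C.Chain, C.GenCycle z ∧ C.inF t s z}

/-- The Upsilon invariant `Υ_C(t) = −2 γ_C(t)`. -/
noncomputable def Upsilon (t : ℝ) : ℝ := -2 * C.gamma t

/-- `P`: the set of bifiltration levels of basis elements. -/
def PSet : Set (ℤ × ℤ) := Set.range C.lev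

/-- `P_u = { p ∈ P : f_u(p) = γ_C(u) }`. -/
def Pt (u : ℝ) : Set (ℤ × ℤ) := {p ∈ C.PSet | fval u p = C.gamma u}

/-- `p` is the negative pivot point of `C` at `t`. -/
def IsNegPivot (t : ℝ) (p : ℤ × ℤ) : Prop :=
  ∃ δ₀ > (0 : ℝ), ∀ δ : ℝ, 0 < δ → δ < δ₀ → C.Pt (t - δ) ∩ C.Pt t = {p}

/-- `p` is the positive pivot point of `C` at `t`. -/
def IsPosPivot (t : ℝ) (p : ℤ × ℤ) : Prop :=
  ∃ δ₀ > (0 : ℝ), ∀ δ : ℝ, 0 < δ → δ < δ₀ → C.Pt (t + δ) ∩ C.Pt t = {p}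

/-- Cycles in `F_{t−δ, γ_C(t−δ)}` representing the nonzero class of `H₀(C)`. -/
def ZminusAt (t δ : ℝ) : Set C.Chain :=
  {z | C.GenCycle z ∧ C.inF (t - δ) (C.gamma (t - δ)) z}

/-- Cycles in `F_{t+δ, γ_C(t+δ)}` representing the nonzero class of `H₀(C)`. -/
def ZplusAt (t δ : ℝ) : Set C.Chain :=
  {z | C.GenCycle z ∧ C.inF (t + δ) (C.gamma (t + δ)) z}

/-- `Z⁻`: the (eventual, for all sufficiently small `δ > 0`) set of cycles in
`F_{t−δ, γ_C(t−δ)}` representing the nonzero class of `H₀(C)`. -/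
def Zminus (t : ℝ) : Set C.Chain :=
  {z | ∃ δ₀ > (0 : ℝ), ∀ δ : ℝ, 0 < δ → δ < δ₀ → z ∈ C.ZminusAt t δ}

/-- `Z⁺`: the (eventual, for all sufficiently small `δ > 0`) set of cycles in
`F_{t+δ, γ_C(t+δ)}` representing the nonzero class of `H₀(C)`. -/
def Zplus (t : ℝ) : Set C.Chain :=
  {z | ∃ δ₀ > (0 : ℝ), ∀ δ : ℝ, 0 < δ → δ < δ₀ → z ∈ C.ZplusAt t δ}

/-- A basis element lies in the subcomplex `F_{t,γ_C(t)} + F_{s,r}`. -/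
def inRegion (t s r : ℝ) (x : C.B) : Prop :=
  fval t (C.lev x) ≤ C.gamma t ∨ fval s (C.lev x) ≤ r

/-- `z` and `z'` represent the same homology class in `H₀(F_{t,γ_C(t)} + F_{s,r})`
(over F₂ the difference `z − z'` is `z + z'`). -/
def sameClass (t s r : ℝ) (z z' : C.Chain) : Prop :=
  (∀ x, z x ≠ 0 → C.inRegion t s r x) ∧
  (∀ x, z' x ≠ 0 → C.inRegion t s r x) ∧
  ∃ w : C.Chain, (∀ x, w x ≠ 0 → C.inRegion t s r x) ∧ C.bdry w = z + z'

/-- The set of `r` for which some `z⁻ ∈ Z⁻` and `z⁺ ∈ Z⁺` represent the same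
class in `H₀(F_{t,γ_C(t)} + F_{s,r})`. -/
def gamma2Set (t s : ℝ) : Set ℝ :=
  {r | ∃ zm ∈ C.Zminus t, ∃ zp ∈ C.Zplus t, C.sameClass t s r zm zp}

/-- `γ²_{C,t}(s)`, as an extended real: the minimum of `gamma2Set`
(`−∞` if the condition holds for every `r`). -/
noncomputable def gamma2 (t s : ℝ) : EReal :=
  sInf ((fun r : ℝ => (r : EReal)) '' C.gamma2Set t s)

/-- `Υ²_{C,t}(s) = −2 (γ²_{C,t}(s) − γ_C(t))`. -/
noncomputable def Upsilon2 (t s : ℝ) : EReal :=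
  (-2 : EReal) * (C.gamma2 t s - (C.gamma t : EReal))

end PreComplex

/-- The jump of the derivative of `f` at `t`: the right-hand derivative minus
the left-hand derivative. -/
noncomputable def derivJump (f : ℝ → ℝ) (t : ℝ) : ℝ :=
  derivWithin f (Set.Ici t) t - derivWithin f (Set.Iic t) t

/-- Direct sum of two pre-complexes. -/
def PreComplex.dsum (C A : PreComplex) : PreComplex where
  B := C.B ⊕ A.B
  fB := inferInstance
  dB := inferInstance
  gr := Sum.elim C.gr A.gr
  alg := Sum.elim C.alg A.alg
  alex := Sum.elim C.alex A.alex
  d := fun x y =>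
    match x, y with
    | Sum.inl x, Sum.inl y => C.d x y
    | Sum.inr x, Sum.inr y => A.d x y
    | _, _ => 0

/-- Tensor product of two pre-complexes. -/
def PreComplex.tensor (C₁ C₂ : PreComplex) : PreComplex where
  B := C₁.B × C₂.B
  fB := inferInstance
  dB := inferInstance
  gr := fun x => C₁.gr x.1 + C₂.gr x.2
  alg := fun x => C₁.alg x.1 + C₂.alg x.2
  alex := fun x => C₁.alex x.1 + C₂.alex x.2
  d := fun x y =>
    (if x.2 = y.2 then C₁.d x.1 y.1 else 0) + (if x.1 = y.1 then C₂.d x.2 y.2 else 0)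

/-- An isomorphism of pre-complexes: a bijection of the distinguished bases
preserving `gr`, `alg`, `alex`, whose linear extension commutes with the
differentials. -/
def PreComplex.Iso (C₁ C₂ : PreComplex) : Prop :=
  ∃ e : C₁.B ≃ C₂.B,
    (∀ x, C₂.gr (e x) = C₁.gr x) ∧
    (∀ x, C₂.alg (e x) = C₁.alg x) ∧
    (∀ x, C₂.alex (e x) = C₁.alex x) ∧
    (∀ x y, C₂.d (e x) (e y) = C₁.d x y)

/-- Stable equivalence of pre-complexes: isomorphism after adding acyclic
summands. -/
def PreComplex.StablyEquiv (C₁ C₂ : PreComplex) : Prop :=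
  ∃ A₁ A₂ : PreComplex, A₁.IsAcyclic ∧ A₂.IsAcyclic ∧ (C₁.dsum A₁).Iso (C₂.dsum A₂)

/-- The model complex `C₁` (for `T(4,5) # −T(2,3;2,5)`, modulo acyclics):
grading-0 generators `A₁, A₂` at levels (0,2), (2,0) and a grading-1
generator `B` at level (2,2) with `∂B = A₁ + A₂`. -/
def Cone : PreComplex where
  B := Fin 3
  fB := inferInstance
  dB := inferInstance
  gr := ![0, 0, 1]
  alg := ![0, 2, 2]
  alex := ![2, 0, 2]
  d := fun x y => if x.val = 2 ∧ (y.val = 0 ∨ y.val = 1) then 1 else 0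

/-- The model complex `C₂` (for `T(2,5)`): grading-0 generators `a₁,a₂,a₃`
at levels (0,2), (1,1), (2,0) and grading-1 generators `b₁,b₂` at levels
(1,2), (2,1), with `∂b₁ = a₁ + a₂`, `∂b₂ = a₂ + a₃`. -/
def Ctwo : PreComplex where
  B := Fin 5
  fB := inferInstance
  dB := inferInstance
  gr := ![0, 0, 0, 1, 1]
  alg := ![0, 1, 2, 1, 2]
  alex := ![2, 1, 0, 2, 1]
  d := fun x y =>
    if (x.val = 3 ∧ (y.val = 0 ∨ y.val = 1)) ∨ (x.val = 4 ∧ (y.val = 1 ∨ y.val = 2))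
    then 1 else 0

/-- The model complex `−C₂` (for `−T(2,5)`): grading-0 generators
`a'₁,a'₂,a'₃` at levels (0,−2), (−1,−1), (−2,0) and grading-(−1) generators
`c₁,c₂` at levels (−1,−2), (−2,−1), with `∂a'₁ = c₁`, `∂a'₂ = c₁ + c₂`,
`∂a'₃ = c₂`. -/
def mCtwo : PreComplex where
  B := Fin 5
  fB := inferInstance
  dB := inferInstance
  gr := ![0, 0, 0, -1, -1]
  alg := ![0, -1, -2, -1, -2]
  alex := ![-2, -1, 0, -2, -1]
  d := fun x y =>
    if (x.val = 0 ∧ y.val = 3) ∨ (x.val = 1 ∧ (y.val = 3 ∨ y.val = 4)) ∨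
       (x.val = 2 ∧ y.val = 4)
    then 1 else 0


namespace HK

abbrev T : PreComplex := Cone.tensor mCtwo

def ix (i : Fin 3) (j : Fin 5) : T.B := ((i, j) : Fin 3 × Fin 5)

def zA : T.Chain := fun x => if (x : Fin 3 × Fin 5).1.val = 0 ∧ (x : Fin 3 × Fin 5).2.val ≤ 2 then 1 else 0
def zB : T.Chain := fun x => if (x : Fin 3 × Fin 5).1.val = 1 ∧ (x : Fin 3 × Fin 5).2.val ≤ 2 then 1 else 0
def w0 : T.Chain := fun x => if (x : Fin 3 × Fin 5).1.val = 2 ∧ (x : Fin 3 × Fin 5).2.val ≤ 2 then 1 else 0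

set_option linter.unreachableTactic false
set_option linter.unusedTactic false

lemma bdry_eval (z : T.Chain) (i : Fin 3) (j : Fin 5) :
    T.bdry z (ix i j) =
      if i.val ≤ 1 then
        if j.val ≤ 2 then z (ix 2 j)
        else if j.val = 3 then z (ix i 0) + z (ix i 1) + z (ix 2 3)
        else z (ix i 1) + z (ix i 2) + z (ix 2 4)
      else
        if j.val ≤ 2 then 0
        else if j.val = 3 then z (ix 2 0) + z (ix 2 1)
        else z (ix 2 1) + z (ix 2 2) := by
  have hs : ∀ f : T.B → ZMod 2, ∑ x, f x = ∑ i : Fin 3, ∑ j : Fin 5, f (ix i j) :=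
    fun f => Fintype.sum_prod_type f
  have hd : ∀ a c : Fin 3, ∀ b e : Fin 5, T.d (ix a b) (ix c e) =
      (if b = e then Cone.d a c else 0) + (if a = c then mCtwo.d b e else 0) :=
    fun _ _ _ _ => rfl
  fin_cases i <;> fin_cases j <;>
    simp only [PreComplex.bdry, hs, hd, Fin.sum_univ_succ, Fin.sum_univ_zero] <;>
    simp (config := { decide := true }) [ix, Cone, mCtwo, Fin.succ] <;>
    first | rfl | ring1 | (congr 1 <;> decide)

/-- the four cycle equations -/
lemma cyc (z : T.Chain) (hc : T.isCycle z) :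
    z (ix 0 0) + z (ix 0 1) + z (ix 2 3) = 0 ∧
    z (ix 0 1) + z (ix 0 2) + z (ix 2 4) = 0 ∧
    z (ix 1 0) + z (ix 1 1) + z (ix 2 3) = 0 ∧
    z (ix 1 1) + z (ix 1 2) + z (ix 2 4) = 0 := by
  have h1 := congrFun hc (ix 0 3)
  have h2 := congrFun hc (ix 0 4)
  have h3 := congrFun hc (ix 1 3)
  have h4 := congrFun hc (ix 1 4)
  rw [bdry_eval] at h1 h2 h3 h4
  norm_num at h1 h2 h3 h4
  exact ⟨h1, h2, h3, h4⟩

/-- gradedness kills the seven non-grading-0 coordinates -/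
lemma grZero (z : T.Chain) (hg : T.isGraded z 0) :
    z (ix 0 3) = 0 ∧ z (ix 0 4) = 0 ∧ z (ix 1 3) = 0 ∧ z (ix 1 4) = 0 ∧
    z (ix 2 0) = 0 ∧ z (ix 2 1) = 0 ∧ z (ix 2 2) = 0 := by
  refine ⟨?_, ?_, ?_, ?_, ?_, ?_, ?_⟩ <;>
    { by_contra h; exact absurd (hg _ h) (by decide) }

def phi (c : T.Chain) : ZMod 2 :=
  c (ix 0 0) + c (ix 0 1) + c (ix 0 2) + c (ix 1 0) + c (ix 1 1) + c (ix 1 2)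

lemma phi_bdry (w : T.Chain) : phi (T.bdry w) = 0 := by
  unfold phi
  rw [bdry_eval w 0 0, bdry_eval w 0 1, bdry_eval w 0 2,
    bdry_eval w 1 0, bdry_eval w 1 1, bdry_eval w 1 2]
  norm_num
  exact (by decide : ∀ a b c : ZMod 2, a + b + c + a + b + c = 0) _ _ _

lemma genCycle_zA : T.GenCycle zA := by
  refine ⟨(by decide : T.bdry zA = 0), ?_, ?_⟩
  · exact fun x h => (by decide : ∀ x, zA x ≠ 0 → T.gr x = 0) x h
  · rintro ⟨w, hw⟩
    have h := phi_bdry w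
    rw [hw] at h
    exact absurd h (by decide)

lemma genCycle_zB : T.GenCycle zB := by
  refine ⟨(by decide : T.bdry zB = 0), ?_, ?_⟩
  · exact fun x h => (by decide : ∀ x, zB x ≠ 0 → T.gr x = 0) x h
  · rintro ⟨w, hw⟩
    have h := phi_bdry w
    rw [hw] at h
    exact absurd h (by decide)

lemma fval_pair (t : ℝ) (a b : ℤ) : fval t (a, b) = t/2 * (b:ℝ) + (1 - t/2) * (a:ℝ) := rfl



/-- if a graded-0 cycle vanishes at (0,0),(1,0),(1,1),(1,2),(2,3),(2,4) it is zero -/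
lemma vanish_minus (z : T.Chain) (hc : T.isCycle z) (hg : T.isGraded z 0)
    (h00 : z (ix 0 0) = 0) (h10 : z (ix 1 0) = 0) (h11 : z (ix 1 1) = 0)
    (h12 : z (ix 1 2) = 0) (h23 : z (ix 2 3) = 0) (h24 : z (ix 2 4) = 0) :
    z = 0 := by
  obtain ⟨e1, e2, e3, e4⟩ := cyc z hc
  obtain ⟨g1, g2, g3, g4, g5, g6, g7⟩ := grZero z hg
  have key : ∀ a b c g h : ZMod 2, a + b + g = 0 → b + c + h = 0 → a = 0 → g = 0 → h = 0 →
      b = 0 ∧ c = 0 := by decide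
  obtain ⟨h01, h02⟩ := key _ _ _ _ _ e1 e2 h00 h23 h24
  funext x
  obtain ⟨i, j⟩ := x
  fin_cases i <;> fin_cases j <;>
    first
    | exact h00 | exact h01 | exact h02 | exact h10 | exact h11 | exact h12
    | exact h23 | exact h24 | exact g1 | exact g2 | exact g3 | exact g4
    | exact g5 | exact g6 | exact g7

/-- if a graded-0 cycle vanishes at (0,0),(0,1),(0,2),(1,2),(2,3),(2,4) it is zero -/
lemma vanish_plus (z : T.Chain) (hc : T.isCycle z) (hg : T.isGraded z 0)
    (h00 : z (ix 0 0) = 0) (h01 : z (ix 0 1) = 0) (h02 : z (ix 0 2) = 0)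
    (h12 : z (ix 1 2) = 0) (h23 : z (ix 2 3) = 0) (h24 : z (ix 2 4) = 0) :
    z = 0 := by
  obtain ⟨e1, e2, e3, e4⟩ := cyc z hc
  obtain ⟨g1, g2, g3, g4, g5, g6, g7⟩ := grZero z hg
  have key : ∀ d e f g h : ZMod 2, d + e + g = 0 → e + f + h = 0 → f = 0 → g = 0 → h = 0 →
      d = 0 ∧ e = 0 := by decide
  obtain ⟨h10, h11⟩ := key _ _ _ _ _ e3 e4 h12 h23 h24
  funext x
  obtain ⟨i, j⟩ := x
  fin_cases i <;> fin_cases j <;>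
    first
    | exact h00 | exact h01 | exact h02 | exact h10 | exact h11 | exact h12
    | exact h23 | exact h24 | exact g1 | exact g2 | exact g3 | exact g4
    | exact g5 | exact g6 | exact g7

/-- a generating cycle supported in {(0,0),(0,1),(0,2),(1,2)} is zA -/
lemma class_minus (z : T.Chain) (hz : T.GenCycle z)
    (h10 : z (ix 1 0) = 0) (h11 : z (ix 1 1) = 0)
    (h23 : z (ix 2 3) = 0) (h24 : z (ix 2 4) = 0) : z = zA := by
  obtain ⟨hc, hg, hnb⟩ := hz
  obtain ⟨e1, e2, e3, e4⟩ := cyc z hc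
  obtain ⟨g1, g2, g3, g4, g5, g6, g7⟩ := grZero z hg
  have h12 : z (ix 1 2) = 0 :=
    (by decide : ∀ e f h : ZMod 2, e + f + h = 0 → e = 0 → h = 0 → f = 0) _ _ _ e4 h11 h24
  by_cases h00 : z (ix 0 0) = 0
  · exact absurd ⟨0, by rw [vanish_minus z hc hg h00 h10 h11 h12 h23 h24]; decide⟩ hnb
  · have h00' : z (ix 0 0) = 1 := (by decide : ∀ a : ZMod 2, a ≠ 0 → a = 1) _ h00
    have key : ∀ a b c g h : ZMod 2, a + b + g = 0 → b + c + h = 0 → a = 1 → g = 0 → h = 0 →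
        b = 1 ∧ c = 1 := by decide
    obtain ⟨h01, h02⟩ := key _ _ _ _ _ e1 e2 h00' h23 h24
    funext x
    obtain ⟨i, j⟩ := x
    fin_cases i <;> fin_cases j <;>
      first
      | exact h00' | exact h01 | exact h02 | exact h10 | exact h11 | exact h12
      | exact h23 | exact h24 | exact g1 | exact g2 | exact g3 | exact g4
      | exact g5 | exact g6 | exact g7

/-- a generating cycle supported in {(0,0),(1,0),(1,1),(1,2)} is zB -/
lemma class_plus (z : T.Chain) (hz : T.GenCycle z)
    (h01 : z (ix 0 1) = 0) (h02 : z (ix 0 2) = 0)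
    (h23 : z (ix 2 3) = 0) (h24 : z (ix 2 4) = 0) : z = zB := by
  obtain ⟨hc, hg, hnb⟩ := hz
  obtain ⟨e1, e2, e3, e4⟩ := cyc z hc
  obtain ⟨g1, g2, g3, g4, g5, g6, g7⟩ := grZero z hg
  have h00 : z (ix 0 0) = 0 :=
    (by decide : ∀ a b g : ZMod 2, a + b + g = 0 → b = 0 → g = 0 → a = 0) _ _ _ e1 h01 h23
  by_cases h10 : z (ix 1 0) = 0
  · have key : ∀ d e f g h : ZMod 2, d + e + g = 0 → e + f + h = 0 → d = 0 → g = 0 → h = 0 →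
        e = 0 ∧ f = 0 := by decide
    obtain ⟨h11, h12⟩ := key _ _ _ _ _ e3 e4 h10 h23 h24
    exact absurd ⟨0, by rw [vanish_plus z hc hg h00 h01 h02 h12 h23 h24]; decide⟩ hnb
  · have h10' : z (ix 1 0) = 1 := (by decide : ∀ a : ZMod 2, a ≠ 0 → a = 1) _ h10
    have key : ∀ d e f g h : ZMod 2, d + e + g = 0 → e + f + h = 0 → d = 1 → g = 0 → h = 0 →
        e = 1 ∧ f = 1 := by decide
    obtain ⟨h11, h12⟩ := key _ _ _ _ _ e3 e4 h10' h23 h24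
    funext x
    obtain ⟨i, j⟩ := x
    fin_cases i <;> fin_cases j <;>
      first
      | exact h00 | exact h01 | exact h02 | exact h10' | exact h11 | exact h12
      | exact h23 | exact h24 | exact g1 | exact g2 | exact g3 | exact g4
      | exact g5 | exact g6 | exact g7

lemma mem_S_le (t : ℝ) (h1 : t ≤ 1) : ∃ z : T.Chain, T.GenCycle z ∧ T.inF t 0 z := by
  refine ⟨zA, genCycle_zA, fun x hx => ?_⟩
  rcases (by decide : ∀ x, zA x ≠ 0 → x = ix 0 0 ∨ x = ix 0 1 ∨ x = ix 0 2) x hx with h | h | h <;>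
    subst h
  · rw [show T.lev (ix 0 0) = ((0:ℤ),(0:ℤ)) from by decide, fval_pair]; push_cast; linarith
  · rw [show T.lev (ix 0 1) = ((-1:ℤ),(1:ℤ)) from by decide, fval_pair]; push_cast; linarith
  · rw [show T.lev (ix 0 2) = ((-2:ℤ),(2:ℤ)) from by decide, fval_pair]; push_cast; linarith

lemma mem_S_ge (t : ℝ) (h1 : 1 ≤ t) : ∃ z : T.Chain, T.GenCycle z ∧ T.inF t 0 z := by
  refine ⟨zB, genCycle_zB, fun x hx => ?_⟩
  rcases (by decide : ∀ x, zB x ≠ 0 → x = ix 1 0 ∨ x = ix 1 1 ∨ x = ix 1 2) x hx with h | h | h <;>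
    subst h
  · rw [show T.lev (ix 1 0) = ((2:ℤ),(-2:ℤ)) from by decide, fval_pair]; push_cast; linarith
  · rw [show T.lev (ix 1 1) = ((1:ℤ),(-1:ℤ)) from by decide, fval_pair]; push_cast; linarith
  · rw [show T.lev (ix 1 2) = ((0:ℤ),(0:ℤ)) from by decide, fval_pair]; push_cast; linarith

lemma S_lb (t : ℝ) (h0 : 0 ≤ t) (h2 : t ≤ 2) :
    ∀ s ∈ {s : ℝ | ∃ z : T.Chain, T.GenCycle z ∧ T.inF t s z}, 0 ≤ s := by
  rintro s ⟨z, hgen, hinF⟩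
  by_contra hs
  push_neg at hs
  have hzero : ∀ (i : Fin 3) (j : Fin 5) (a b : ℤ), T.lev (ix i j) = (a, b) →
      0 ≤ t/2 * (b:ℝ) + (1 - t/2) * (a:ℝ) → z (ix i j) = 0 := by
    intro i j a b hl hf
    by_contra h
    have := hinF _ h
    rw [hl, fval_pair] at this
    linarith
  rcases le_total t 1 with ht | ht
  · have h00 := hzero 0 0 0 0 (by decide) (by push_cast; linarith)
    have h10 := hzero 1 0 2 (-2) (by decide) (by push_cast; linarith)
    have h11 := hzero 1 1 1 (-1) (by decide) (by push_cast; linarith)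
    have h12 := hzero 1 2 0 0 (by decide) (by push_cast; linarith)
    have h23 := hzero 2 3 1 0 (by decide) (by push_cast; linarith)
    have h24 := hzero 2 4 0 1 (by decide) (by push_cast; linarith)
    exact hgen.2.2 ⟨0, by
      rw [vanish_minus z hgen.1 hgen.2.1 h00 h10 h11 h12 h23 h24]; decide⟩
  · have h00 := hzero 0 0 0 0 (by decide) (by push_cast; linarith)
    have h01 := hzero 0 1 (-1) 1 (by decide) (by push_cast; linarith)
    have h02 := hzero 0 2 (-2) 2 (by decide) (by push_cast; linarith)
    have h12 := hzero 1 2 0 0 (by decide) (by push_cast; linarith)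
    have h23 := hzero 2 3 1 0 (by decide) (by push_cast; linarith)
    have h24 := hzero 2 4 0 1 (by decide) (by push_cast; linarith)
    exact hgen.2.2 ⟨0, by
      rw [vanish_plus z hgen.1 hgen.2.1 h00 h01 h02 h12 h23 h24]; decide⟩

lemma gamma_eq (t : ℝ) (h0 : 0 ≤ t) (h2 : t ≤ 2) : T.gamma t = 0 := by
  have hmem : (0:ℝ) ∈ {s : ℝ | ∃ z : T.Chain, T.GenCycle z ∧ T.inF t s z} := by
    rcases le_total t 1 with ht | ht
    · exact mem_S_le t ht
    · exact mem_S_ge t ht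
  exact le_antisymm (csInf_le ⟨0, fun s hs => S_lb t h0 h2 s hs⟩ hmem)
    (le_csInf ⟨0, hmem⟩ (S_lb t h0 h2))

lemma zA_mem_Zminus : zA ∈ T.Zminus 1 := by
  refine ⟨1, one_pos, fun δ hδ0 hδ1 => ⟨genCycle_zA, fun x hx => ?_⟩⟩
  rw [gamma_eq (1-δ) (by linarith) (by linarith)]
  rcases (by decide : ∀ x, zA x ≠ 0 → x = ix 0 0 ∨ x = ix 0 1 ∨ x = ix 0 2) x hx with h | h | h <;>
    subst h
  · rw [show T.lev (ix 0 0) = ((0:ℤ),(0:ℤ)) from by decide, fval_pair]; push_cast; linarith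
  · rw [show T.lev (ix 0 1) = ((-1:ℤ),(1:ℤ)) from by decide, fval_pair]; push_cast; linarith
  · rw [show T.lev (ix 0 2) = ((-2:ℤ),(2:ℤ)) from by decide, fval_pair]; push_cast; linarith

lemma zB_mem_Zplus : zB ∈ T.Zplus 1 := by
  refine ⟨1, one_pos, fun δ hδ0 hδ1 => ⟨genCycle_zB, fun x hx => ?_⟩⟩
  rw [gamma_eq (1+δ) (by linarith) (by linarith)]
  rcases (by decide : ∀ x, zB x ≠ 0 → x = ix 1 0 ∨ x = ix 1 1 ∨ x = ix 1 2) x hx with h | h | h <;>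
    subst h
  · rw [show T.lev (ix 1 0) = ((2:ℤ),(-2:ℤ)) from by decide, fval_pair]; push_cast; linarith
  · rw [show T.lev (ix 1 1) = ((1:ℤ),(-1:ℤ)) from by decide, fval_pair]; push_cast; linarith
  · rw [show T.lev (ix 1 2) = ((0:ℤ),(0:ℤ)) from by decide, fval_pair]; push_cast; linarith

lemma Zminus_eq (z : T.Chain) (hz : z ∈ T.Zminus 1) : z = zA := by
  obtain ⟨δ₀, hδ₀, h⟩ := hz
  have hmin : 0 < min δ₀ 1 := lt_min hδ₀ one_pos
  have hma : min δ₀ 1 ≤ δ₀ := min_le_left _ _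
  have hmb : min δ₀ 1 ≤ 1 := min_le_right _ _
  set δ : ℝ := min δ₀ 1 / 2 with hδdef
  obtain ⟨hgen, hinF⟩ := h δ (by positivity) (by rw [hδdef]; linarith)
  rw [gamma_eq (1-δ) (by rw [hδdef]; linarith) (by rw [hδdef]; linarith)] at hinF
  have hzero : ∀ (i : Fin 3) (j : Fin 5) (a b : ℤ), T.lev (ix i j) = (a, b) →
      0 < (1-δ)/2 * (b:ℝ) + (1 - (1-δ)/2) * (a:ℝ) → z (ix i j) = 0 := by
    intro i j a b hl hf
    by_contra hcon
    have := hinF _ hcon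
    rw [hl, fval_pair] at this
    linarith
  have hδ0 : (0:ℝ) < δ := by positivity
  have hδ1 : δ < 1 := by rw [hδdef]; linarith
  have h10 := hzero 1 0 2 (-2) (by decide) (by push_cast; linarith)
  have h11 := hzero 1 1 1 (-1) (by decide) (by push_cast; linarith)
  have h23 := hzero 2 3 1 0 (by decide) (by push_cast; linarith)
  have h24 := hzero 2 4 0 1 (by decide) (by push_cast; linarith)
  exact class_minus z hgen h10 h11 h23 h24

lemma Zplus_eq (z : T.Chain) (hz : z ∈ T.Zplus 1) : z = zB := by
  obtain ⟨δ₀, hδ₀, h⟩ := hz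
  have hmin : 0 < min δ₀ 1 := lt_min hδ₀ one_pos
  have hma : min δ₀ 1 ≤ δ₀ := min_le_left _ _
  have hmb : min δ₀ 1 ≤ 1 := min_le_right _ _
  set δ : ℝ := min δ₀ 1 / 2 with hδdef
  obtain ⟨hgen, hinF⟩ := h δ (by positivity) (by rw [hδdef]; linarith)
  rw [gamma_eq (1+δ) (by rw [hδdef]; linarith) (by rw [hδdef]; linarith)] at hinF
  have hzero : ∀ (i : Fin 3) (j : Fin 5) (a b : ℤ), T.lev (ix i j) = (a, b) →
      0 < (1+δ)/2 * (b:ℝ) + (1 - (1+δ)/2) * (a:ℝ) → z (ix i j) = 0 := by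
    intro i j a b hl hf
    by_contra hcon
    have := hinF _ hcon
    rw [hl, fval_pair] at this
    linarith
  have hδ0 : (0:ℝ) < δ := by positivity
  have hδ1 : δ < 1 := by rw [hδdef]; linarith
  have h01 := hzero 0 1 (-1) 1 (by decide) (by push_cast; linarith)
  have h02 := hzero 0 2 (-2) 2 (by decide) (by push_cast; linarith)
  have h23 := hzero 2 3 1 0 (by decide) (by push_cast; linarith)
  have h24 := hzero 2 4 0 1 (by decide) (by push_cast; linarith)
  exact class_plus z hgen h01 h02 h23 h24

lemma gamma_one : T.gamma 1 = 0 := gamma_eq 1 (by norm_num) (by norm_num)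

lemma gamma2set_mem (s r : ℝ) (h1 : 2 - s ≤ r) (h2 : 1 ≤ r) (h3 : s ≤ r) :
    r ∈ T.gamma2Set 1 s := by
  have hreg0 : ∀ (i : Fin 3) (j : Fin 5), T.lev (ix i j) = ((0:ℤ),(0:ℤ)) ∨
      T.lev (ix i j) = ((-1:ℤ),(1:ℤ)) ∨ T.lev (ix i j) = ((-2:ℤ),(2:ℤ)) ∨
      T.lev (ix i j) = ((1:ℤ),(-1:ℤ)) ∨ T.lev (ix i j) = ((2:ℤ),(-2:ℤ)) →
      T.inRegion 1 s r (ix i j) := by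
    intro i j hl
    left
    rw [gamma_one]
    rcases hl with h | h | h | h | h <;> rw [h, fval_pair] <;> push_cast <;> linarith
  refine ⟨zA, zA_mem_Zminus, zB, zB_mem_Zplus, fun x hx => ?_, fun x hx => ?_,
    w0, fun x hx => ?_, by decide⟩
  · rcases (by decide : ∀ x, zA x ≠ 0 → x = ix 0 0 ∨ x = ix 0 1 ∨ x = ix 0 2) x hx
      with h | h | h <;> subst h <;>
      exact hreg0 _ _ (by decide)
  · rcases (by decide : ∀ x, zB x ≠ 0 → x = ix 1 0 ∨ x = ix 1 1 ∨ x = ix 1 2) x hx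
      with h | h | h <;> subst h <;>
      exact hreg0 _ _ (by decide)
  · rcases (by decide : ∀ x, w0 x ≠ 0 → x = ix 2 0 ∨ x = ix 2 1 ∨ x = ix 2 2) x hx
      with h | h | h <;> subst h <;> right
    · rw [show T.lev (ix 2 0) = ((2:ℤ),(0:ℤ)) from by decide, fval_pair]; push_cast; linarith
    · rw [show T.lev (ix 2 1) = ((1:ℤ),(1:ℤ)) from by decide, fval_pair]; push_cast; linarith
    · rw [show T.lev (ix 2 2) = ((0:ℤ),(2:ℤ)) from by decide, fval_pair]; push_cast; linarith

lemma gamma2set_lb (s r : ℝ) (hr : r ∈ T.gamma2Set 1 s) : 2 - s ≤ r ∧ 1 ≤ r ∧ s ≤ r := by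
  obtain ⟨zm, hm, zp, hp, hreg1, hreg2, w, hwreg, hw⟩ := hr
  rw [Zminus_eq zm hm, Zplus_eq zp hp] at hw
  have kw : ∀ (j : Fin 5), j.val ≤ 2 → ∀ (a b : ℤ), (zA + zB) (ix 0 j) = 1 → T.lev (ix 2 j) = (a, b) →
      ¬ (1:ℝ)/2 * (b:ℝ) + (1 - 1/2) * (a:ℝ) ≤ 0 → s/2 * (b:ℝ) + (1 - s/2) * (a:ℝ) ≤ r := by
    intro j hj a b hab hl hpos
    have hv := congrFun hw (ix 0 j)
    rw [bdry_eval, hab] at hv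
    norm_num at hv
    rw [if_pos hj] at hv
    have hne : w (ix 2 j) ≠ 0 := by rw [hv]; exact one_ne_zero
    rcases hwreg _ hne with hc | hc
    · rw [gamma_one, hl, fval_pair] at hc; exact absurd hc hpos
    · rw [hl, fval_pair] at hc; exact hc
  refine ⟨?_, ?_, ?_⟩
  · have := kw 0 (by decide) 2 0 (by decide) (by decide) (by push_cast; norm_num)
    push_cast at this; linarith
  · have := kw 1 (by decide) 1 1 (by decide) (by decide) (by push_cast; norm_num)
    push_cast at this; linarith
  · have := kw 2 (by decide) 0 2 (by decide) (by decide) (by push_cast; norm_num)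
    push_cast at this; linarith

lemma gamma2_eq (s : ℝ) (hs0 : 0 ≤ s) (hs2 : s ≤ 2) :
    T.gamma2 1 s = ((max (2 - s) s : ℝ) : EReal) := by
  have h2 : (1:ℝ) ≤ max (2-s) s := by
    rcases le_total s 1 with h | h
    · exact le_trans (by linarith) (le_max_left _ _)
    · exact le_trans h (le_max_right _ _)
  have hmem := gamma2set_mem s (max (2-s) s) (le_max_left _ _) h2 (le_max_right _ _)
  refine le_antisymm (sInf_le ⟨_, hmem, rfl⟩) (le_sInf ?_)
  rintro b ⟨x, hx, rfl⟩
  obtain ⟨l1, l2, l3⟩ := gamma2set_lb s x hx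
  exact EReal.coe_le_coe_iff.mpr (max_le l1 l3)

end HK

/-- for `C = C₁ ⊗ (−C₂)` (a model for Hom's knot
`T(4,5) # −T(2,3;2,5) # −T(2,5)` modulo acyclics), `Υ_C ≡ 0` but
`Υ²_{C,1}(s) = −4 + 2s` on `[0,1]` and `= −2s` on `[1,2]`. -/
theorem upsilon2_Hom_knot :
    (∀ t ∈ Set.Icc (0 : ℝ) 2, (Cone.tensor mCtwo).Upsilon t = 0) ∧
    (∀ s ∈ Set.Icc (0 : ℝ) 1,
        (Cone.tensor mCtwo).Upsilon2 1 s = ((-4 + 2 * s : ℝ) : EReal)) ∧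
    (∀ s ∈ Set.Icc (1 : ℝ) 2,
        (Cone.tensor mCtwo).Upsilon2 1 s = ((-2 * s : ℝ) : EReal)) := by
  refine ⟨fun t ht => ?_, fun s hs => ?_, fun s hs => ?_⟩
  · show -2 * (Cone.tensor mCtwo).gamma t = 0
    rw [HK.gamma_eq t ht.1 ht.2]
    ring
  · show (-2 : EReal) * ((Cone.tensor mCtwo).gamma2 1 s - ((Cone.tensor mCtwo).gamma 1 : EReal))
        = ((-4 + 2 * s : ℝ) : EReal)
    rw [HK.gamma2_eq s hs.1 (by linarith [hs.2]), HK.gamma_one,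
      max_eq_left (by linarith [hs.1, hs.2] : s ≤ 2 - s),
      show ((0:ℝ) : EReal) = ((0:ℝ) : EReal) from rfl, ← EReal.coe_sub,
      show (-2 : EReal) = ((-2 : ℝ) : EReal) by rw [EReal.coe_neg]; norm_num; rfl, ← EReal.coe_mul,
      EReal.coe_eq_coe_iff]
    ring
  · show (-2 : EReal) * ((Cone.tensor mCtwo).gamma2 1 s - ((Cone.tensor mCtwo).gamma 1 : EReal))
        = ((-2 * s : ℝ) : EReal)
    rw [HK.gamma2_eq s (by linarith [hs.1]) hs.2, HK.gamma_one,
      max_eq_right (by linarith [hs.1, hs.2] : 2 - s ≤ s),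
      ← EReal.coe_sub,
      show (-2 : EReal) = ((-2 : ℝ) : EReal) by rw [EReal.coe_neg]; norm_num; rfl, ← EReal.coe_mul,
      EReal.coe_eq_coe_iff]
    ring
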